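/- For the replicator dynamic of a finite exact potential game, the (mixed extension of the) potential function U is a strict Lyapunov function: along any solution trajectory α(t), dU(α(t))/dt = ∑_{i∈N} Var_{α_i}[U(·, α_{-i})] ≥ 0, with equality exactly at stationary states of the dynamic. -/

import Mathlib

open Finset

/-- Multilinear mixed extension of a function on pure profiles. -/
noncomputable def gMix {ι : Type*} [Fintype ι] [DecidableEq ι] {A : ι → Type*}
    [∀ i, Fintype (A i)] (v : (∀ j, A j) → ℝ) (x : ∀ i, A i → ℝ) : ℝ :=
  ∑ a : ∀ j, A j, (∏ j, x j (a j)) * v a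

/-- The mixed strategy putting all mass on the pure strategy `ai`. -/
noncomputable def gPure {ι : Type*} {A : ι → Type*} [∀ i, DecidableEq (A i)]
    (i : ι) (ai : A i) : A i → ℝ :=
  fun b => if b = ai then 1 else 0

/-- Payoff to player `i` from pure strategy `ai` against the mixed profile `x`. -/
noncomputable def gPayP {ι : Type*} [Fintype ι] [DecidableEq ι] {A : ι → Type*}
    [∀ i, Fintype (A i)] [∀ i, DecidableEq (A i)]
    (u : ι → (∀ j, A j) → ℝ) (x : ∀ i, A i → ℝ) (i : ι) (ai : A i) : ℝ :=
  gMix (u i) (Function.update x i (gPure i ai))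

/-- The replicator vector field: ẋᵢ(aᵢ) = xᵢ(aᵢ)(uᵢ(aᵢ,x₋ᵢ) - uᵢ(x)). -/
noncomputable def gRepl {ι : Type*} [Fintype ι] [DecidableEq ι] {A : ι → Type*}
    [∀ i, Fintype (A i)] [∀ i, DecidableEq (A i)]
    (u : ι → (∀ j, A j) → ℝ) (x : ∀ i, A i → ℝ) (i : ι) (ai : A i) : ℝ :=
  x i ai * (gPayP u x i ai - gMix (u i) x)

/-- The variance of aᵢ ↦ U(aᵢ, x₋ᵢ) under the distribution xᵢ. -/
noncomputable def gVar {ι : Type*} [Fintype ι] [DecidableEq ι] {A : ι → Type*}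
    [∀ i, Fintype (A i)] [∀ i, DecidableEq (A i)]
    (U : (∀ j, A j) → ℝ) (x : ∀ i, A i → ℝ) (i : ι) : ℝ :=
  (∑ ai : A i, x i ai * (gPayP (fun _ => U) x i ai) ^ 2) -
    (∑ ai : A i, x i ai * gPayP (fun _ => U) x i ai) ^ 2

section Aux
variable {ι : Type*} [Fintype ι] [DecidableEq ι] {A : ι → Type*}
    [∀ i, Fintype (A i)] [∀ i, DecidableEq (A i)]

lemma prod_update_eq (x : ∀ i, A i → ℝ) (i : ι) (p : A i → ℝ) (a : ∀ j, A j) :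
    (∏ j, Function.update x i p j (a j)) = p (a i) * ∏ j ∈ ({i}ᶜ : Finset ι), x j (a j) := by
  rw [Fintype.prod_eq_mul_prod_compl i]
  congr 1
  · simp
  · exact Finset.prod_congr rfl fun j hj => by
      rw [Function.update_of_ne (by simpa using hj)]

lemma gMix_update_pure (v : (∀ j, A j) → ℝ) (x : ∀ i, A i → ℝ) (i : ι) (ai : A i) :
    gMix v (Function.update x i (gPure i ai)) =
      ∑ a : ∀ j, A j, (if a i = ai then 1 else 0) *
        ((∏ j ∈ ({i}ᶜ : Finset ι), x j (a j)) * v a) := by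
  unfold gMix
  refine Finset.sum_congr rfl fun a _ => ?_
  rw [prod_update_eq]
  simp [gPure, mul_assoc]

lemma sum_pure_expand (v : (∀ j, A j) → ℝ) (x : ∀ i, A i → ℝ) (i : ι) (g : A i → ℝ) :
    ∑ ai : A i, g ai * gMix v (Function.update x i (gPure i ai)) =
      ∑ a : ∀ j, A j, g (a i) * ((∏ j ∈ ({i}ᶜ : Finset ι), x j (a j)) * v a) := by
  simp_rw [gMix_update_pure, Finset.mul_sum]
  rw [Finset.sum_comm]
  refine Finset.sum_congr rfl fun a _ => ?_
  simp [mul_ite, ite_mul, Finset.sum_ite_eq]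

lemma gMix_eq_sum (v : (∀ j, A j) → ℝ) (x : ∀ i, A i → ℝ) (i : ι) :
    gMix v x = ∑ ai : A i, x i ai * gMix v (Function.update x i (gPure i ai)) := by
  rw [sum_pure_expand]
  exact Finset.sum_congr rfl fun a _ => by
    rw [Fintype.prod_eq_mul_prod_compl i, mul_assoc]

lemma gMix_pure_indep (f : (∀ j, A j) → ℝ) (x : ∀ i, A i → ℝ) (i : ι)
    (hf : ∀ (a : ∀ j, A j) (b : A i), f (Function.update a i b) = f a)
    (ai bi : A i) :
    gMix f (Function.update x i (gPure i ai)) = gMix f (Function.update x i (gPure i bi)) := by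
  rw [gMix_update_pure, gMix_update_pure]
  have hinv : Function.Involutive
      (fun a : ∀ j, A j => Function.update a i (Equiv.swap ai bi (a i))) := by
    intro a
    simp [Function.update_idem, Function.update_self, Equiv.swap_apply_self,
      Function.update_eq_self]
  refine Fintype.sum_equiv hinv.toPerm _ _ fun a => ?_
  have h1 : Function.update a i (Equiv.swap ai bi (a i)) i = Equiv.swap ai bi (a i) :=
    Function.update_self _ _ _
  have h2 : (∏ j ∈ ({i}ᶜ : Finset ι), x j
      (Function.update a i (Equiv.swap ai bi (a i)) j)) =
      ∏ j ∈ ({i}ᶜ : Finset ι), x j (a j) :=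
    Finset.prod_congr rfl fun j hj => by rw [Function.update_of_ne (by simpa using hj)]
  have h3 : f (Function.update a i (Equiv.swap ai bi (a i))) = f a := hf _ _
  have h4 : (Equiv.swap ai bi (a i) = bi) = (a i = ai) := by
    simp [Equiv.swap_apply_eq_iff, Equiv.swap_apply_right]
  simp only [Function.Involutive.coe_toPerm, h1, h2, h3, h4]


end Aux

section Aux2
variable {ι : Type*} [Fintype ι] [DecidableEq ι] {A : ι → Type*}
    [∀ i, Fintype (A i)] [∀ i, DecidableEq (A i)]

lemma gMix_sub (v w : (∀ j, A j) → ℝ) (x : ∀ i, A i → ℝ) :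
    gMix (fun a => v a - w a) x = gMix v x - gMix w x := by
  simp [gMix, mul_sub, Finset.sum_sub_distrib]

lemma gRepl_eq (u : ι → (∀ j, A j) → ℝ) (U : (∀ j, A j) → ℝ)
    (hpot : ∀ (i : ι) (a : ∀ j, A j) (b : A i),
      u i (Function.update a i b) - u i a = U (Function.update a i b) - U a)
    (x : ∀ i, A i → ℝ) (i : ι) (hs : (∑ bi : A i, x i bi) = 1) (ai : A i) :
    gRepl u x i ai = x i ai * (gPayP (fun _ => U) x i ai - gMix U x) := by
  set f : (∀ j, A j) → ℝ := fun a => u i a - U a with hfdef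
  have hf : ∀ (a : ∀ j, A j) (b : A i), f (Function.update a i b) = f a := by
    intro a b
    have := hpot i a b
    simp only [hfdef]
    linarith
  have key : gMix f x = gMix f (Function.update x i (gPure i ai)) := by
    rw [gMix_eq_sum f x i]
    have : ∀ bi : A i, gMix f (Function.update x i (gPure i bi)) =
        gMix f (Function.update x i (gPure i ai)) := fun bi => gMix_pure_indep f x i hf bi ai
    simp_rw [this, ← Finset.sum_mul, hs, one_mul]
  have e1 : gPayP u x i ai - gPayP (fun _ => U) x i ai =
      gMix f (Function.update x i (gPure i ai)) := by
    rw [gPayP, gPayP, ← gMix_sub]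
  have e2 : gMix (u i) x - gMix U x = gMix f x := by
    rw [← gMix_sub]
  have : gPayP u x i ai - gMix (u i) x = gPayP (fun _ => U) x i ai - gMix U x := by
    linarith
  rw [gRepl, this]

lemma gVar_eq (U : (∀ j, A j) → ℝ) (x : ∀ i, A i → ℝ) (i : ι)
    (hs : (∑ bi : A i, x i bi) = 1) :
    gVar U x i = ∑ ai : A i, x i ai * (gPayP (fun _ => U) x i ai - gMix U x) ^ 2 := by
  have hm : (∑ ai : A i, x i ai * gPayP (fun _ => U) x i ai) = gMix U x :=
    (gMix_eq_sum U x i).symm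
  have expand : ∀ ai : A i, x i ai * (gPayP (fun _ => U) x i ai - gMix U x) ^ 2 =
      x i ai * (gPayP (fun _ => U) x i ai) ^ 2
      - 2 * gMix U x * (x i ai * gPayP (fun _ => U) x i ai)
      + (gMix U x) ^ 2 * x i ai := fun ai => by ring
  simp_rw [gVar, expand, Finset.sum_add_distrib, Finset.sum_sub_distrib, ← Finset.mul_sum, hm, hs]
  ring

end Aux2

/-- For the replicator dynamic of a finite exact potential game, the mixed
extension of the potential U is a strict Lyapunov function: along any solution
trajectory, dU(α(t))/dt equals the sum over players of the variance of
U(·, α₋ᵢ(t)) under αᵢ(t), which is nonnegative, and vanishes exactly at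
stationary states of the dynamic. -/
theorem stmt_15 {ι : Type*} [Fintype ι] [DecidableEq ι] (A : ι → Type*)
    [∀ i, Fintype (A i)] [∀ i, DecidableEq (A i)] [∀ i, Nonempty (A i)]
    (u : ι → (∀ j, A j) → ℝ) (U : (∀ j, A j) → ℝ)
    (hpot : ∀ (i : ι) (a : ∀ j, A j) (b : A i),
      u i (Function.update a i b) - u i a = U (Function.update a i b) - U a)
    (α : ℝ → ∀ i, A i → ℝ)
    (hprob : ∀ t i, (∀ ai, 0 ≤ α t i ai) ∧ (∑ ai : A i, α t i ai) = 1)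
    (htraj : ∀ (t : ℝ) (i : ι) (ai : A i),
      HasDerivAt (fun s => α s i ai) (gRepl u (α t) i ai) t) :
    ∀ t : ℝ,
      HasDerivAt (fun s => gMix U (α s)) (∑ i, gVar U (α t) i) t ∧
      0 ≤ ∑ i, gVar U (α t) i ∧
      ((∑ i, gVar U (α t) i) = 0 ↔ ∀ (i : ι) (ai : A i), gRepl u (α t) i ai = 0) := by
  intro t
  set x := α t with hx
  have hxnn : ∀ i (ai : A i), 0 ≤ x i ai := fun i => (hprob t i).1
  have hxs : ∀ i, (∑ ai : A i, x i ai) = 1 := fun i => (hprob t i).2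
  have hrepl : ∀ i (ai : A i),
      gRepl u x i ai = x i ai * (gPayP (fun _ => U) x i ai - gMix U x) :=
    fun i ai => gRepl_eq u U hpot x i (hxs i) ai
  have hvar : ∀ i, gVar U x i =
      ∑ ai : A i, x i ai * (gPayP (fun _ => U) x i ai - gMix U x) ^ 2 :=
    fun i => gVar_eq U x i (hxs i)
  have hmean : ∀ i, (∑ ai : A i, x i ai * gPayP (fun _ => U) x i ai) = gMix U x :=
    fun i => (gMix_eq_sum U x i).symm
  refine ⟨?_, ?_, ?_⟩
  · -- derivative
    have hD : ∀ a : ∀ j, A j,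
        HasDerivAt (fun s => (∏ j, α s j (a j)) * U a)
          ((∑ i, (∏ j ∈ Finset.univ.erase i, α t j (a j)) * gRepl u x i (a i)) * U a) t := by
      intro a
      have := (HasDerivAt.finset_prod
        (u := Finset.univ) (f := fun j s => α s j (a j))
        (f' := fun j => gRepl u x j (a j)) (x := t)
        (fun j _ => htraj t j (a j))).mul_const (U a)
      simpa [smul_eq_mul] using this
    have hsum := HasDerivAt.fun_sum (fun a (_ : a ∈ (Finset.univ : Finset (∀ j, A j))) => hD a)
    have hfun : (fun s => ∑ a : ∀ j, A j, (∏ j, α s j (a j)) * U a)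
        = fun s => gMix U (α s) := by
      funext s; rfl
    rw [hfun] at hsum
    refine hsum.congr_deriv ?_
    symm
    simp_rw [Finset.sum_mul]
    rw [Finset.sum_comm]
    refine Finset.sum_congr rfl fun i _ => ?_
    have herase : ∀ a : ∀ j, A j, (∏ j ∈ Finset.univ.erase i, α t j (a j))
        = ∏ j ∈ ({i}ᶜ : Finset ι), x j (a j) := by
      intro a
      rw [hx]
      congr 1
      ext j
      simp [Finset.mem_erase, eq_comm, and_comm]
    have step1 : (∑ ai : A i, gRepl u x i ai * gPayP (fun _ => U) x i ai) = gVar U x i := by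
      simp_rw [hvar, hrepl]
      have e1 : ∀ ai : A i, x i ai * (gPayP (fun _ => U) x i ai - gMix U x)
            * gPayP (fun _ => U) x i ai
          = x i ai * gPayP (fun _ => U) x i ai ^ 2
            - gMix U x * (x i ai * gPayP (fun _ => U) x i ai) := fun ai => by ring
      have e2 : ∀ ai : A i, x i ai * (gPayP (fun _ => U) x i ai - gMix U x) ^ 2
          = x i ai * gPayP (fun _ => U) x i ai ^ 2
            - 2 * gMix U x * (x i ai * gPayP (fun _ => U) x i ai)
            + gMix U x ^ 2 * x i ai := fun ai => by ring
      simp_rw [e1, e2, Finset.sum_add_distrib, Finset.sum_sub_distrib, ← Finset.mul_sum,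
        hmean, hxs]
      ring
    have step2 := sum_pure_expand U x i (fun ai => gRepl u x i ai)
    calc gVar U x i
        = ∑ ai : A i, gRepl u x i ai * gPayP (fun _ => U) x i ai := step1.symm
      _ = ∑ a : ∀ j, A j, gRepl u x i (a i) *
            ((∏ j ∈ ({i}ᶜ : Finset ι), x j (a j)) * U a) := step2
      _ = ∑ a : ∀ j, A j, (∏ j ∈ Finset.univ.erase i, α t j (a j))
            * gRepl u x i (a i) * U a := by
          refine Finset.sum_congr rfl fun a _ => ?_
          rw [herase a]; ring
  · -- nonneg
    refine Finset.sum_nonneg fun i _ => ?_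
    rw [hvar]
    exact Finset.sum_nonneg fun ai _ => mul_nonneg (hxnn i ai) (sq_nonneg _)
  · -- zero iff
    constructor
    · intro h i ai
      have hnn : ∀ i ∈ (Finset.univ : Finset ι), 0 ≤ gVar U x i := fun i _ => by
        rw [hvar]
        exact Finset.sum_nonneg fun ai _ => mul_nonneg (hxnn i ai) (sq_nonneg _)
      have hi : gVar U x i = 0 :=
        (Finset.sum_eq_zero_iff_of_nonneg hnn).mp h i (Finset.mem_univ i)
      rw [hvar] at hi
      have hterm : x i ai * (gPayP (fun _ => U) x i ai - gMix U x) ^ 2 = 0 :=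
        (Finset.sum_eq_zero_iff_of_nonneg
          (fun ai _ => mul_nonneg (hxnn i ai) (sq_nonneg _))).mp hi ai (Finset.mem_univ ai)
      rw [hrepl]
      rcases mul_eq_zero.mp hterm with h0 | h0
      · rw [h0, zero_mul]
      · rw [sq_eq_zero_iff.mp h0, mul_zero]
    · intro h
      refine Finset.sum_eq_zero fun i _ => ?_
      rw [hvar]
      refine Finset.sum_eq_zero fun ai _ => ?_
      have h0 : x i ai * (gPayP (fun _ => U) x i ai - gMix U x) = 0 := by
        rw [← hrepl]; exact h i ai
      have hexp : x i ai * (gPayP (fun _ => U) x i ai - gMix U x) ^ 2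
          = (x i ai * (gPayP (fun _ => U) x i ai - gMix U x))
            * (gPayP (fun _ => U) x i ai - gMix U x) := by ring
      rw [hexp, h0, zero_mul]
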